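/- Suppose a small category C satisfies: (1) for each object X, the poset reflection of the slice C/X is Artinian (well-founded under strict inequality of images), and (2) for each f : Y → X there exists f' : Y' → X with im(f) = im(f') such that for every r : Z → Y', if im(r ≫ f') = im(f') then r is a split epimorphism. Then every Grothendieck topology on C is rigid. -/

import Mathlib

open CategoryTheory

universe u

/-- `im f ≤ im g` in the poset reflection of `C / X`: `f` factors through `g` in `C`. -/
def ImLE {C : Type u} [SmallCategory C] {X Y W : C} (f : Y ⟶ X) (g : W ⟶ X) : Prop :=
  ∃ h : Y ⟶ W, h ≫ g = f

/-- The poset reflection of `C / X` is Artinian: there is no infinite strictly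
decreasing sequence of images. -/
def ArtinianSlice {C : Type u} [SmallCategory C] (X : C) : Prop :=
  ¬ ∃ (Y : ℕ → C) (f : ∀ n, Y n ⟶ X),
      ∀ n, ImLE (f (n + 1)) (f n) ∧ ¬ ImLE (f n) (f (n + 1))

/-- Condition (⋆): every `f : Y ⟶ X` has an image-equivalent `f' : Y' ⟶ X` such that any
`r : Z ⟶ Y'` with `im (r ≫ f') = im f'` is a split epimorphism. -/
def StarCond (C : Type u) [SmallCategory C] : Prop :=
  ∀ {X Y : C} (f : Y ⟶ X), ∃ (Y' : C) (f' : Y' ⟶ X),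
    ImLE f f' ∧ ImLE f' f ∧
      ∀ {Z : C} (r : Z ⟶ Y'), ImLE f' (r ≫ f') → IsSplitEpi r

/-- An object `X` is `J`-irreducible if the only `J`-covering sieve on `X` is the maximal one. -/
def JIrreducible {C : Type u} [SmallCategory C] (J : GrothendieckTopology C) (X : C) : Prop :=
  ∀ S : Sieve X, S ∈ J X → S = ⊤

/-- A Grothendieck topology `J` is rigid if every object admits a `J`-covering sieve generated
by morphisms whose domains are `J`-irreducible. -/
def JRigid {C : Type u} [SmallCategory C] (J : GrothendieckTopology C) : Prop :=
  ∀ X : C, Sieve.generate (fun Y (_ : Y ⟶ X) => JIrreducible J Y) ∈ J X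

/-- The strict order on arrows into `X` given by strict inequality of images. -/
def ImLT {C : Type u} [SmallCategory C] (X : C) (a b : Σ Y : C, Y ⟶ X) : Prop :=
  ImLE a.2 b.2 ∧ ¬ ImLE b.2 a.2

theorem imLT_wf {C : Type u} [SmallCategory C] (X : C) (h1 : ArtinianSlice X) :
    WellFounded (ImLT X) := by
  have htrans : IsTrans (Σ Y : C, Y ⟶ X) (ImLT X) := by
    constructor
    rintro a b c ⟨⟨h, hh⟩, hab⟩ ⟨⟨k, hk⟩, hbc⟩
    refine ⟨⟨h ≫ k, by rw [Category.assoc, hk, hh]⟩, fun ⟨m, hm⟩ => hbc ?_⟩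
    exact ⟨m ≫ h, by rw [Category.assoc, hh, hm]⟩
  have hirrefl : IsIrrefl (Σ Y : C, Y ⟶ X) (ImLT X) :=
    ⟨fun a ⟨hle, hnle⟩ => hnle hle⟩
  haveI : IsStrictOrder (Σ Y : C, Y ⟶ X) (ImLT X) := ⟨⟩
  rw [RelEmbedding.wellFounded_iff_isEmpty]
  constructor
  intro e
  exact h1 ⟨fun n => (e n).1, fun n => (e n).2, fun n => e.map_rel_iff.2 (Nat.lt_succ_self n)⟩

theorem stmt9 {C : Type u} [SmallCategory C]
    (h1 : ∀ X : C, ArtinianSlice X) (h2 : StarCond C) :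
    ∀ J : GrothendieckTopology C, JRigid J := by
  intro J X
  set S : Sieve X := Sieve.generate (fun Y (_ : Y ⟶ X) => JIrreducible J Y) with hS
  have key : ∀ a : Σ Y : C, Y ⟶ X, S.pullback a.2 ∈ J a.1 := by
    intro a
    induction a using WellFounded.induction (imLT_wf X (h1 X)) with
    | _ a ih =>
      obtain ⟨Y, f⟩ := a
      obtain ⟨Y', f', ⟨h, hh⟩, ⟨k, hk⟩, hsplit⟩ := h2 f
      -- it suffices to show the pullback along f'
      have main : S.pullback f' ∈ J Y' := by
        by_cases hirr : JIrreducible J Y'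
        · have : S f' := ⟨Y', 𝟙 Y', f', hirr, Category.id_comp f'⟩
          rw [Sieve.mem_iff_pullback_eq_top] at this
          rw [this]; exact J.top_mem Y'
        · simp only [JIrreducible, not_forall] at hirr
          obtain ⟨R, hR, hRtop⟩ := hirr
          refine J.transitive hR _ (fun {Z} r hr => ?_)
          rw [← Sieve.pullback_comp]
          -- show (Z, r ≫ f') is strictly smaller than (Y, f)
          have hlt : ImLT X ⟨Z, r ≫ f'⟩ ⟨Y, f⟩ := by
            constructor
            · exact ⟨r ≫ k, by rw [Category.assoc, hk]⟩
            · rintro ⟨m, hm⟩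
              have : ImLE f' (r ≫ f') := ⟨k ≫ m, by rw [Category.assoc]; dsimp only at hm ⊢; rw [hm, hk]⟩
              have hse := hsplit r this
              have : R.arrows (𝟙 Y') := by
                have := R.downward_closed hr (CategoryTheory.section_ r)
                rwa [IsSplitEpi.id r] at this
              exact hRtop (Sieve.id_mem_iff_eq_top.mp this)
          exact ih _ hlt
      have : (S.pullback f').pullback h ∈ J Y := J.pullback_stable h main
      rwa [← Sieve.pullback_comp, hh] at this
  have := key ⟨X, 𝟙 X⟩
  rwa [Sieve.pullback_id] at this
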